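/- Fix a constant L > 0, a finite index set V, a nonempty subset N ⊆ V with |N| = m, admissible functions h_i : ℝ → ℝ for i ∈ V, and a nonempty closed convex set 𝒳 ⊆ ℝ. Let β be a real number with β ≤ 1/m and let γ be a natural number with γ ≤ m. Then the set Ỹ(β,γ) is convex and closed. -/

import Mathlib

open Set Filter Topology


lemma ytilde_combo {u v : ℝ} (hu : u ≤ 0) (hv : 0 ≤ v) :
    ∃ s : ℝ, 0 ≤ s ∧ s ≤ 1 ∧ (1 - s) * u + s * v = 0 := by
  rcases eq_or_lt_of_le (hu.trans hv) with h | h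
  · refine ⟨0, le_rfl, zero_le_one, ?_⟩
    have hu0 : u = 0 := le_antisymm hu (by rw [h]; exact hv)
    simp [hu0]
  · refine ⟨-u / (v - u), div_nonneg (neg_nonneg.mpr hu) (sub_pos.mpr h).le, ?_, ?_⟩
    · rw [div_le_one (sub_pos.mpr h)]; linarith
    · have hne : v - u ≠ 0 := (sub_pos.mpr h).ne'
      field_simp
      ring

lemma ytilde_grad_ineq {f : ℝ → ℝ} (hc : ConvexOn ℝ Set.univ f)
    (hd : Differentiable ℝ f) (x y : ℝ) :
    f x + deriv f x * (y - x) ≤ f y := by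
  rcases lt_trichotomy x y with hxy | rfl | hyx
  · have h1 := hc.deriv_le_slope (mem_univ x) (mem_univ y) hxy (hd x)
    rw [slope_def_field] at h1
    rw [le_div_iff₀ (by linarith : (0:ℝ) < y - x)] at h1
    linarith
  · simp
  · have h1 := hc.slope_le_deriv (mem_univ y) (mem_univ x) hyx (hd x)
    rw [slope_def_field] at h1
    rw [div_le_iff₀ (by linarith : (0:ℝ) < x - y)] at h1
    have he : deriv f x * (y - x) = -(deriv f x * (x - y)) := by ring
    linarith

lemma ytilde_deriv_nonneg {f : ℝ → ℝ} {X : Set ℝ} (hXc : Convex ℝ X)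
    {x y d : ℝ} (hf : HasDerivAt f d x) (hx : x ∈ X) (hy : y ∈ X) (hxy : x < y)
    (hmin : ∀ z ∈ X, f x ≤ f z) : 0 ≤ d := by
  have ht : Tendsto (slope f x) (𝓝[>] x) (𝓝 d) :=
    (hasDerivAt_iff_tendsto_slope.mp hf).mono_left
      (nhdsWithin_mono x fun z hz => ne_of_gt hz)
  refine ge_of_tendsto ht ?_
  filter_upwards [Ioo_mem_nhdsGT_of_mem (Set.left_mem_Ico.mpr hxy)] with z hz
  have hzX : z ∈ X := hXc.ordConnected.out hx hy ⟨hz.1.le, hz.2.le⟩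
  rw [slope_def_field]
  exact div_nonneg (sub_nonneg.mpr (hmin z hzX)) (sub_nonneg.mpr hz.1.le)

lemma ytilde_deriv_nonpos {f : ℝ → ℝ} {X : Set ℝ} (hXc : Convex ℝ X)
    {x y d : ℝ} (hf : HasDerivAt f d x) (hx : x ∈ X) (hy : y ∈ X) (hxy : y < x)
    (hmin : ∀ z ∈ X, f x ≤ f z) : d ≤ 0 := by
  have ht : Tendsto (slope f x) (𝓝[<] x) (𝓝 d) :=
    (hasDerivAt_iff_tendsto_slope.mp hf).mono_left
      (nhdsWithin_mono x fun z hz => ne_of_lt hz)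
  refine le_of_tendsto ht ?_
  filter_upwards [Ioo_mem_nhdsLT_of_mem (Set.right_mem_Ioc.mpr hxy)] with z hz
  have hzX : z ∈ X := hXc.ordConnected.out hy hx ⟨hz.1.le, hz.2.le⟩
  rw [slope_def_field]
  exact div_nonpos_of_nonneg_of_nonpos (sub_nonneg.mpr (hmin z hzX)) (by linarith [hz.2])


/-- A function `h : ℝ → ℝ` is admissible with constant `L > 0` if it is convex,
continuously differentiable, its derivative is bounded by `L` and `L`-Lipschitz,
and its set of unconstrained global minimizers is nonempty and compact. -/
def Admissible (L : ℝ) (h : ℝ → ℝ) : Prop :=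
  ConvexOn ℝ Set.univ h ∧ ContDiff ℝ 1 h ∧
    (∀ x : ℝ, |deriv h x| ≤ L) ∧ LipschitzWith L.toNNReal (deriv h) ∧
    {x : ℝ | ∀ y : ℝ, h x ≤ h y}.Nonempty ∧ IsCompact {x : ℝ | ∀ y : ℝ, h x ≤ h y}

/-- A weight vector `α` over the index set `V` is `(β,γ)`-valid over `(V,N)` if
all weights are nonnegative, they sum (over `V`) to `1`, and at least `γ`
indices in `N` have weight at least `β`. -/
def ValidWeightVN {ι : Type*} (V N : Finset ι) (β : ℝ) (γ : ℕ) (α : ι → ℝ) : Prop :=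
  (∀ i ∈ V, 0 ≤ α i) ∧ (∑ i ∈ V, α i = 1) ∧
    ∃ S ⊆ N, γ ≤ S.card ∧ ∀ i ∈ S, β ≤ α i

/-- `Ỹ(β,γ)`: the union over all weight vectors `α` that are `(β,γ)`-valid over
`(V,N)` of the set of minimizers over the constraint set `𝒳` of
`x ↦ ∑_{i∈V} α_i h_i(x)`. -/
def YTildeSet {ι : Type*} (V N : Finset ι) (h : ι → ℝ → ℝ) (X : Set ℝ)
    (β : ℝ) (γ : ℕ) : Set ℝ :=
  {x : ℝ | x ∈ X ∧ ∃ α : ι → ℝ, ValidWeightVN V N β γ α ∧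
    ∀ y ∈ X, ∑ i ∈ V, α i * h i x ≤ ∑ i ∈ V, α i * h i y}

/-- Lemma (constant c): if `β ≤ 1/|N|` and `γ ≤ |N|`, the set `Ỹ(β,γ)` is
convex and closed. -/
theorem YTildeSet_convex_isClosed {ι : Type*} (L : ℝ) (hL : 0 < L)
    (V N : Finset ι) (hNV : N ⊆ V) (hNne : N.Nonempty) (m : ℕ) (hm : N.card = m)
    (h : ι → ℝ → ℝ) (hadm : ∀ i ∈ V, Admissible L (h i))
    (X : Set ℝ) (hXne : X.Nonempty) (hXcl : IsClosed X) (hXconv : Convex ℝ X)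
    (β : ℝ) (hβ : β ≤ 1 / (m : ℝ)) (γ : ℕ) (hγ : γ ≤ m) :
    Convex ℝ (YTildeSet V N h X β γ) ∧ IsClosed (YTildeSet V N h X β γ) := by
  classical
  have hd : ∀ i ∈ V, Differentiable ℝ (h i) := fun i hi =>
    ((hadm i hi).2.1).differentiable one_ne_zero
  have hcv : ∀ i ∈ V, ConvexOn ℝ Set.univ (h i) := fun i hi => (hadm i hi).1
  have hcont : ∀ i ∈ V, Continuous (h i) := fun i hi => ((hadm i hi).2.1).continuous
  have hVne : V.Nonempty := ⟨hNne.choose, hNV hNne.choose_spec⟩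
  have hm0 : 0 < m := hm ▸ Finset.card_pos.mpr hNne
  have hm0' : (0:ℝ) < m := by exact_mod_cast hm0
  -- derivative of the weighted sum
  have hder : ∀ (α : ι → ℝ) (x : ℝ),
      HasDerivAt (fun t => ∑ i ∈ V, α i * h i t) (∑ i ∈ V, α i * deriv (h i) x) x :=
    fun α x => HasDerivAt.fun_sum fun i hi => ((hd i hi x).hasDerivAt).const_mul (α i)
  -- gradient inequality for the weighted sum
  have hgrad : ∀ (α : ι → ℝ), (∀ i ∈ V, 0 ≤ α i) → ∀ x y : ℝ,
      (∑ i ∈ V, α i * h i x) + (∑ i ∈ V, α i * deriv (h i) x) * (y - x)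
        ≤ ∑ i ∈ V, α i * h i y := by
    intro α hα x y
    have hterm : ∀ i ∈ V, α i * (h i x + deriv (h i) x * (y - x)) ≤ α i * h i y :=
      fun i hi => mul_le_mul_of_nonneg_left (ytilde_grad_ineq (hcv i hi) (hd i hi) x y)
        (hα i hi)
    have hsum := Finset.sum_le_sum hterm
    calc (∑ i ∈ V, α i * h i x) + (∑ i ∈ V, α i * deriv (h i) x) * (y - x)
        = ∑ i ∈ V, α i * (h i x + deriv (h i) x * (y - x)) := by
          rw [Finset.sum_mul, ← Finset.sum_add_distrib]
          exact Finset.sum_congr rfl fun i _ => by ring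
      _ ≤ _ := hsum
  -- monotonicity of the weighted derivative
  have hmonoG : ∀ (α : ι → ℝ), (∀ i ∈ V, 0 ≤ α i) → ∀ {x x' : ℝ}, x ≤ x' →
      (∑ i ∈ V, α i * deriv (h i) x) ≤ ∑ i ∈ V, α i * deriv (h i) x' := by
    intro α hα x x' hxx
    refine Finset.sum_le_sum fun i hi => ?_
    have hm1 : MonotoneOn (deriv (h i)) Set.univ :=
      (hcv i hi).monotoneOn_deriv fun z _ => (hd i hi z)
    exact mul_le_mul_of_nonneg_left (hm1 (mem_univ x) (mem_univ x') hxx) (hα i hi)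
  -- sufficiency of zero derivative
  have hsuff : ∀ (α : ι → ℝ), (∀ i ∈ V, 0 ≤ α i) → ∀ x : ℝ,
      (∑ i ∈ V, α i * deriv (h i) x) = 0 →
      ∀ y ∈ X, ∑ i ∈ V, α i * h i x ≤ ∑ i ∈ V, α i * h i y := by
    intro α hα x hGx y _
    have := hgrad α hα x y
    rw [hGx, zero_mul, add_zero] at this
    exact this
  -- the uniform weight vector
  set αu : ι → ℝ := fun i => if i ∈ N then (1:ℝ)/m else 0 with hαu
  have hαu_nonneg : ∀ i ∈ V, 0 ≤ αu i := by
    intro i _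
    simp only [hαu]
    split <;> positivity
  have hαu_sum : ∑ i ∈ V, αu i = 1 := by
    simp only [hαu]
    rw [Finset.sum_ite_mem, Finset.inter_eq_right.mpr hNV, Finset.sum_const, hm,
      nsmul_eq_mul]
    field_simp
  have hαu_ge : ∀ i ∈ N, β ≤ αu i := by
    intro i hi
    simp only [hαu, if_pos hi]
    exact hβ
  -- linearity of weighted sums in the weights
  have hlin : ∀ (s : ℝ) (αA αB c : ι → ℝ),
      ∑ i ∈ V, ((1 - s) * αA i + s * αB i) * c i
        = (1 - s) * (∑ i ∈ V, αA i * c i) + s * (∑ i ∈ V, αB i * c i) := by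
    intro s αA αB c
    rw [Finset.mul_sum, Finset.mul_sum, ← Finset.sum_add_distrib]
    exact Finset.sum_congr rfl fun i _ => by ring
  -- key step for convexity
  have key : ∀ a b : ℝ, a ∈ YTildeSet V N h X β γ → b ∈ YTildeSet V N h X β γ → a ≤ b →
      ∀ z ∈ Set.Icc a b, z ∈ YTildeSet V N h X β γ := by
    intro a b ha hb hab z hz
    obtain ⟨haX, α1, ⟨h1nn, h1sum, S1, hS1N, hS1card, hS1ge⟩, h1min⟩ := ha
    obtain ⟨hbX, α2, ⟨h2nn, h2sum, S2, hS2N, hS2card, hS2ge⟩, h2min⟩ := hb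
    rcases eq_or_lt_of_le hab with rfl | hab'
    · have hza : z = a := le_antisymm hz.2 hz.1
      subst hza
      exact ⟨haX, α1, ⟨h1nn, h1sum, S1, hS1N, hS1card, hS1ge⟩, h1min⟩
    have hzX : z ∈ X := hXconv.ordConnected.out haX hbX hz
    have hG1 : 0 ≤ ∑ i ∈ V, α1 i * deriv (h i) z := by
      have h0 : 0 ≤ ∑ i ∈ V, α1 i * deriv (h i) a :=
        ytilde_deriv_nonneg hXconv (hder α1 a) haX hbX hab' h1min
      exact h0.trans (hmonoG α1 h1nn hz.1)
    have hG2 : (∑ i ∈ V, α2 i * deriv (h i) z) ≤ 0 := by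
      have h0 : (∑ i ∈ V, α2 i * deriv (h i) b) ≤ 0 :=
        ytilde_deriv_nonpos hXconv (hder α2 b) hbX haX hab' h2min
      exact (hmonoG α2 h2nn hz.2).trans h0
    rcases le_total 0 (∑ i ∈ V, αu i * deriv (h i) z) with hu | hu
    · obtain ⟨s, hs0, hs1, hseq⟩ := ytilde_combo hG2 hu
      set α3 : ι → ℝ := fun i => (1 - s) * α2 i + s * αu i with hα3
      have h3nn : ∀ i ∈ V, 0 ≤ α3 i := by
        intro i hi
        have h1 := h2nn i hi
        have h2 := hαu_nonneg i hi
        simp only [hα3]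
        nlinarith
      have hG3 : (∑ i ∈ V, α3 i * deriv (h i) z) = 0 := by
        simp only [hα3]
        rw [hlin]
        exact hseq
      refine ⟨hzX, α3, ⟨h3nn, ?_, S2, hS2N, hS2card, ?_⟩, hsuff α3 h3nn z hG3⟩
      · have := hlin s α2 αu (fun _ => 1)
        simp only [mul_one] at this
        simp only [hα3]
        rw [this, h2sum, hαu_sum]
        ring
      · intro i hiS
        have hb2 : β ≤ α2 i := hS2ge i hiS
        have hbu : β ≤ αu i := hαu_ge i (hS2N hiS)
        simp only [hα3]
        nlinarith
    · obtain ⟨s, hs0, hs1, hseq⟩ := ytilde_combo hu hG1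
      set α3 : ι → ℝ := fun i => (1 - s) * αu i + s * α1 i with hα3
      have h3nn : ∀ i ∈ V, 0 ≤ α3 i := by
        intro i hi
        have h1 := h1nn i hi
        have h2 := hαu_nonneg i hi
        simp only [hα3]
        nlinarith
      have hG3 : (∑ i ∈ V, α3 i * deriv (h i) z) = 0 := by
        simp only [hα3]
        rw [hlin]
        exact hseq
      refine ⟨hzX, α3, ⟨h3nn, ?_, S1, hS1N, hS1card, ?_⟩, hsuff α3 h3nn z hG3⟩
      · have := hlin s αu α1 (fun _ => 1)
        simp only [mul_one] at this
        simp only [hα3]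
        rw [this, h1sum, hαu_sum]
        ring
      · intro i hiS
        have hb1 : β ≤ α1 i := hS1ge i hiS
        have hbu : β ≤ αu i := hαu_ge i (hS1N hiS)
        simp only [hα3]
        nlinarith
  constructor
  · -- Convexity
    intro a ha b hb p q hp hq hpq
    simp only [smul_eq_mul]
    rcases le_total a b with hab | hba
    · refine key a b ha hb hab _ ⟨?_, ?_⟩
      · have e : p * a + q * b - a = q * (b - a) := by linear_combination a * hpq
        linarith [mul_nonneg hq (sub_nonneg.mpr hab)]
      · have e : b - (p * a + q * b) = p * (b - a) := by linear_combination (-b) * hpq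
        linarith [mul_nonneg hp (sub_nonneg.mpr hab)]
    · refine key b a hb ha hba _ ⟨?_, ?_⟩
      · have e : p * a + q * b - b = p * (a - b) := by linear_combination b * hpq
        linarith [mul_nonneg hp (sub_nonneg.mpr hba)]
      · have e : a - (p * a + q * b) = q * (a - b) := by linear_combination (-a) * hpq
        linarith [mul_nonneg hq (sub_nonneg.mpr hba)]
  · -- Closedness
    obtain ⟨x₀, hx₀X⟩ := hXne
    -- a radius bounding all the argmin sets
    have hrex : ∀ i : ι, ∃ r : ℝ, 0 ≤ r ∧
        (i ∈ V → ∀ x : ℝ, (∀ y, h i x ≤ h i y) → |x| ≤ r) := by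
      intro i
      by_cases hi : i ∈ V
      · obtain ⟨r, hr⟩ := ((hadm i hi).2.2.2.2.2).isBounded.subset_closedBall 0
        refine ⟨max r 0, le_max_right _ _, fun _ x hx => ?_⟩
        have hmem : x ∈ Metric.closedBall (0:ℝ) r := hr hx
        rw [Metric.mem_closedBall, Real.dist_eq, sub_zero] at hmem
        exact hmem.trans (le_max_left _ _)
      · exact ⟨0, le_rfl, fun hiV => absurd hiV hi⟩
    choose r hr0 hrspec using hrex
    set R : ℝ := V.sup' hVne r with hR
    have hrR : ∀ i ∈ V, r i ≤ R := fun i hi => Finset.le_sup' r hi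
    set B : ℝ := max R |x₀| with hB
    have hdpos : ∀ i ∈ V, ∀ x : ℝ, R < x → 0 < deriv (h i) x := by
      intro i hi x hx
      obtain ⟨mi, hmi⟩ := (hadm i hi).2.2.2.2.1
      have hmi0 : deriv (h i) mi = 0 := by
        have hloc : IsLocalMin (h i) mi := Filter.Eventually.of_forall hmi
        exact hloc.deriv_eq_zero
      have hmiR : mi ≤ R := (le_abs_self mi).trans
        ((hrspec i hi mi hmi).trans (hrR i hi))
      have hmono : MonotoneOn (deriv (h i)) Set.univ :=
        (hcv i hi).monotoneOn_deriv fun z _ => hd i hi z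
      have h1 : 0 ≤ deriv (h i) x := by
        have := hmono (mem_univ mi) (mem_univ x) (by linarith)
        rw [hmi0] at this
        exact this
      rcases h1.lt_or_eq with hlt | heq
      · exact hlt
      · exfalso
        have hxmin : ∀ y, h i x ≤ h i y := by
          intro y
          have hgi := ytilde_grad_ineq (hcv i hi) (hd i hi) x y
          rw [← heq, zero_mul, add_zero] at hgi
          exact hgi
        have h2 : |x| ≤ R := (hrspec i hi x hxmin).trans (hrR i hi)
        have h3 := le_abs_self x
        linarith
    have hdneg : ∀ i ∈ V, ∀ x : ℝ, x < -R → deriv (h i) x < 0 := by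
      intro i hi x hx
      obtain ⟨mi, hmi⟩ := (hadm i hi).2.2.2.2.1
      have hmi0 : deriv (h i) mi = 0 := by
        have hloc : IsLocalMin (h i) mi := Filter.Eventually.of_forall hmi
        exact hloc.deriv_eq_zero
      have hmiR : -R ≤ mi := by
        have := (neg_abs_le mi)
        have h2 : |mi| ≤ R := (hrspec i hi mi hmi).trans (hrR i hi)
        linarith
      have hmono : MonotoneOn (deriv (h i)) Set.univ :=
        (hcv i hi).monotoneOn_deriv fun z _ => hd i hi z
      have h1 : deriv (h i) x ≤ 0 := by
        have := hmono (mem_univ x) (mem_univ mi) (by linarith)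
        rw [hmi0] at this
        exact this
      rcases h1.lt_or_eq with hlt | heq
      · exact hlt
      · exfalso
        have hxmin : ∀ y, h i x ≤ h i y := by
          intro y
          have hgi := ytilde_grad_ineq (hcv i hi) (hd i hi) x y
          rw [heq, zero_mul, add_zero] at hgi
          exact hgi
        have h2 : |x| ≤ R := (hrspec i hi x hxmin).trans (hrR i hi)
        have h3 := neg_abs_le x
        linarith
    have hposα : ∀ α : ι → ℝ, (∀ i ∈ V, 0 ≤ α i) → (∑ i ∈ V, α i = 1) →
        ∃ i ∈ V, 0 < α i := by
      intro α hnn hsum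
      by_contra hc
      push_neg at hc
      have : ∑ i ∈ V, α i = 0 :=
        Finset.sum_eq_zero fun i hi => le_antisymm (hc i hi) (hnn i hi)
      rw [hsum] at this
      norm_num at this
    -- bound on the minimizers
    have hbound : ∀ (α : ι → ℝ) (x : ℝ), (∀ i ∈ V, 0 ≤ α i) → (∑ i ∈ V, α i = 1) →
        x ∈ X → (∀ y ∈ X, ∑ i ∈ V, α i * h i x ≤ ∑ i ∈ V, α i * h i y) →
        x ∈ Set.Icc (-B) B := by
      intro α x hnn hsum hxX hmin
      by_contra hc
      rw [Set.mem_Icc, not_and_or, not_le, not_le] at hc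
      obtain ⟨j, hjV, hjpos⟩ := hposα α hnn hsum
      have hminx : ∀ z ∈ X, (fun t => ∑ i ∈ V, α i * h i t) x
          ≤ (fun t => ∑ i ∈ V, α i * h i t) z := hmin
      rcases hc with hlt | hgt
      · have hx₀x : x < x₀ := by
          have h1 : |x₀| ≤ B := le_max_right R |x₀|
          have h2 := neg_abs_le x₀
          linarith
        have h0 : 0 ≤ ∑ i ∈ V, α i * deriv (h i) x :=
          ytilde_deriv_nonneg hXconv (hder α x) hxX hx₀X hx₀x hminx
        have hxR : x < -R := by
          have : R ≤ B := le_max_left R |x₀|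
          linarith
        have hterm : ∀ i ∈ V, α i * deriv (h i) x ≤ (fun _ => (0:ℝ)) i := fun i hi =>
          mul_nonpos_iff.mpr (Or.inl ⟨hnn i hi, (hdneg i hi x hxR).le⟩)
        have hj : α j * deriv (h j) x < (fun _ => (0:ℝ)) j :=
          mul_neg_of_pos_of_neg hjpos (hdneg j hjV x hxR)
        have hGneg := Finset.sum_lt_sum hterm ⟨j, hjV, hj⟩
        rw [Finset.sum_const_zero] at hGneg
        linarith
      · have hx₀x : x₀ < x := by
          have h1 : |x₀| ≤ B := le_max_right R |x₀|
          have h2 := le_abs_self x₀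
          linarith
        have h0 : (∑ i ∈ V, α i * deriv (h i) x) ≤ 0 :=
          ytilde_deriv_nonpos hXconv (hder α x) hxX hx₀X hx₀x hminx
        have hxR : R < x := by
          have : R ≤ B := le_max_left R |x₀|
          linarith
        have hGpos : 0 < ∑ i ∈ V, α i * deriv (h i) x :=
          Finset.sum_pos' (fun i hi => mul_nonneg (hnn i hi) (hdpos i hi x hxR).le)
            ⟨j, hjV, mul_pos hjpos (hdpos j hjV x hxR)⟩
        linarith
    -- the compact pieces
    set Q : Set (ι → ℝ) :=
      Set.pi Set.univ (fun i => if i ∈ V then Set.Icc (0:ℝ) 1 else {0}) with hQ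
    have hQc : IsCompact Q := isCompact_univ_pi fun i => by
      by_cases hi : i ∈ V
      · simp only [if_pos hi]; exact isCompact_Icc
      · simp only [if_neg hi]; exact isCompact_singleton
    have hFc : Continuous fun p : (ι → ℝ) × ℝ => ∑ i ∈ V, p.1 i * h i p.2 :=
      continuous_finset_sum _ fun i hi =>
        ((continuous_apply i).comp continuous_fst).mul ((hcont i hi).comp continuous_snd)
    set D : Finset ι → Set ((ι → ℝ) × ℝ) := fun S =>
      {p : (ι → ℝ) × ℝ | p.1 ∈ Q ∧ p.2 ∈ X ∧ (∑ i ∈ V, p.1 i = 1) ∧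
        (∀ i ∈ S, β ≤ p.1 i) ∧
        ∀ y ∈ X, ∑ i ∈ V, p.1 i * h i p.2 ≤ ∑ i ∈ V, p.1 i * h i y} with hD
    have hDclosed : ∀ S : Finset ι, IsClosed (D S) := by
      intro S
      have hrw : D S = ((Q ×ˢ X) ∩ {p : (ι → ℝ) × ℝ | ∑ i ∈ V, p.1 i = 1}) ∩
          ((⋂ i ∈ S, {p : (ι → ℝ) × ℝ | β ≤ p.1 i}) ∩
            ⋂ y ∈ X, {p : (ι → ℝ) × ℝ | ∑ i ∈ V, p.1 i * h i p.2 ≤ ∑ i ∈ V, p.1 i * h i y}) := by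
        ext p
        simp only [hD, Set.mem_setOf_eq, Set.mem_inter_iff, Set.mem_prod, Set.mem_iInter]
        tauto
      rw [hrw]
      refine IsClosed.inter ((hQc.isClosed.prod hXcl).inter ?_) (IsClosed.inter ?_ ?_)
      · exact isClosed_eq
          (continuous_finset_sum _ fun i _ => (continuous_apply i).comp continuous_fst)
          continuous_const
      · exact isClosed_biInter fun i _ =>
          isClosed_le continuous_const ((continuous_apply i).comp continuous_fst)
      · refine isClosed_biInter fun y _ => isClosed_le hFc ?_
        exact continuous_finset_sum _ fun i _ =>
          ((continuous_apply i).comp continuous_fst).mul continuous_const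
    have hDcompact : ∀ S : Finset ι, IsCompact (D S) := by
      intro S
      refine IsCompact.of_isClosed_subset (hQc.prod (isCompact_Icc (a := -B) (b := B)))
        (hDclosed S) ?_
      rintro ⟨α, x⟩ ⟨hα, hxX, hsum, _, hmin⟩
      refine ⟨hα, ?_⟩
      refine hbound α x (fun i hi => ?_) hsum hxX hmin
      have := hα i (Set.mem_univ i)
      simp only [if_pos hi] at this
      exact this.1
    have hYeq : YTildeSet V N h X β γ =
        ⋃ S ∈ N.powerset.filter (fun S => γ ≤ S.card), Prod.snd '' D S := by
      ext x
      simp only [Set.mem_iUnion, Set.mem_image, Finset.mem_filter, Finset.mem_powerset,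
        exists_prop]
      constructor
      · rintro ⟨hxX, α, ⟨hnn, hsum, S, hSN, hScard, hSge⟩, hmin⟩
        refine ⟨S, ⟨hSN, hScard⟩, ((fun i => if i ∈ V then α i else 0), x),
          ⟨?_, hxX, ?_, ?_, ?_⟩, rfl⟩
        · intro i _
          by_cases hi : i ∈ V
          · simp only [if_pos hi]
            refine ⟨hnn i hi, ?_⟩
            calc α i ≤ ∑ k ∈ V, α k := Finset.single_le_sum (fun k hk => hnn k hk) hi
              _ = 1 := hsum
          · simp only [if_neg hi]
            rfl
        · rw [Finset.sum_congr rfl fun i hi => if_pos hi]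
          exact hsum
        · intro i hiS
          have hiV : i ∈ V := hNV (hSN hiS)
          simp only [if_pos hiV]
          exact hSge i hiS
        · intro y hy
          have e : ∀ z : ℝ, (∑ i ∈ V, (if i ∈ V then α i else 0) * h i z)
              = ∑ i ∈ V, α i * h i z :=
            fun z => Finset.sum_congr rfl fun i hi => by rw [if_pos hi]
          rw [e, e]
          exact hmin y hy
      · rintro ⟨S, ⟨hSN, hScard⟩, ⟨α, x'⟩, ⟨hαQ, hx'X, hsum, hSge, hmin⟩, rfl⟩
        refine ⟨hx'X, α, ⟨fun i hi => ?_, hsum, S, hSN, hScard, hSge⟩, hmin⟩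
        have := hαQ i (Set.mem_univ i)
        simp only [if_pos hi] at this
        exact this.1
    rw [hYeq]
    exact isClosed_biUnion_finset fun S _ =>
      ((hDcompact S).image continuous_snd).isClosed
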